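/- Let A be a nonempty subset of the set P of prime numbers. Then A is dense in the topological space X := (ℕ⁺, τ) if and only if A is infinite. -/

import Mathlib

/-- `σ n` is the set of positive integers coprime to `n`. -/
def sigmaSet (n : ℕ+) : Set ℕ+ := {m : ℕ+ | Nat.gcd (n : ℕ) (m : ℕ) = 1}

/-- The base `β = {σ n : n ∈ ℕ⁺}`. -/
def betaBase : Set (Set ℕ+) := {s : Set ℕ+ | ∃ n : ℕ+, s = sigmaSet n}

/-- The topology `τ` on `ℕ⁺` generated by `β`. -/
def tau : TopologicalSpace ℕ+ := TopologicalSpace.generateFrom betaBase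

lemma sigma_basis {U : Set ℕ+} (hU : TopologicalSpace.GenerateOpen betaBase U) :
    ∀ x ∈ U, ∃ n : ℕ+, x ∈ sigmaSet n ∧ sigmaSet n ⊆ U := by
  induction hU with
  | basic s hs =>
      obtain ⟨n, rfl⟩ := hs
      exact fun x hx => ⟨n, hx, le_refl _⟩
  | univ =>
      exact fun x _ => ⟨1, by simp [sigmaSet], fun y _ => trivial⟩
  | inter U V hU hV ihU ihV =>
      rintro x ⟨hxU, hxV⟩
      obtain ⟨n, hxn, hnU⟩ := ihU x hxU
      obtain ⟨m, hxm, hmV⟩ := ihV x hxV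
      refine ⟨n * m, ?_, ?_⟩
      · show Nat.gcd ((n * m : ℕ+) : ℕ) (x : ℕ) = 1
        push_cast
        exact Nat.Coprime.mul hxn hxm
      · intro y hy
        have hy' : Nat.Coprime ((n : ℕ) * m) (y : ℕ) := by
          have := hy; simpa [sigmaSet, Nat.Coprime] using this
        exact ⟨hnU (Nat.Coprime.coprime_dvd_left ⟨m, rfl⟩ hy'),
               hmV (Nat.Coprime.coprime_dvd_left ⟨(n : ℕ), mul_comm _ _⟩ hy')⟩
  | sUnion S hS ih =>
      rintro x ⟨U, hUS, hxU⟩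
      obtain ⟨n, hxn, hnU⟩ := ih U hUS x hxU
      exact ⟨n, hxn, hnU.trans (Set.subset_sUnion_of_mem hUS)⟩

theorem dense_iff_infinite_of_subset_primes
    (A : Set ℕ+) (hA : A ⊆ {p : ℕ+ | (p : ℕ).Prime}) (hne : A.Nonempty) :
    @Dense ℕ+ tau A ↔ A.Infinite := by
  rw [@dense_iff_inter_open ℕ+ tau A]
  constructor
  · intro hdense
    by_contra hfin
    rw [Set.not_infinite] at hfin
    set N : ℕ := ∏ p ∈ hfin.toFinset, (p : ℕ) with hN
    have hNpos : 0 < N := Finset.prod_pos (fun p _ => p.pos)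
    set n : ℕ+ := ⟨N, hNpos⟩ with hn
    have hopen : @IsOpen ℕ+ tau (sigmaSet n) :=
      TopologicalSpace.GenerateOpen.basic _ ⟨n, rfl⟩
    have hnonempty : (sigmaSet n).Nonempty := ⟨1, by simp [sigmaSet]⟩
    obtain ⟨x, hx1, hx2⟩ := hdense _ hopen hnonempty
    have hdvd : (x : ℕ) ∣ N := Finset.dvd_prod_of_mem _ (hfin.mem_toFinset.mpr hx2)
    have hgcd : Nat.gcd (N : ℕ) (x : ℕ) = 1 := hx1
    have : (x : ℕ) ∣ 1 := hgcd ▸ Nat.dvd_gcd hdvd dvd_rfl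
    exact Nat.Prime.one_lt (hA hx2) |>.ne' (Nat.dvd_one.mp this)
  · intro hinf U hUopen hUne
    obtain ⟨x, hx⟩ := hUne
    obtain ⟨n, _, hnU⟩ := sigma_basis hUopen x hx
    have hdivfin : ({m : ℕ+ | (m : ℕ) ∣ (n : ℕ)} : Set ℕ+).Finite := by
      have hfin : ({m : ℕ | m ∣ (n : ℕ)} : Set ℕ).Finite := by
        refine Set.Finite.subset (Nat.divisors (n : ℕ)).finite_toSet ?_
        intro m hm
        simp only [Finset.coe_sort_coe, Finset.mem_coe, Nat.mem_divisors]
        exact ⟨hm, n.ne_zero⟩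
      exact Set.Finite.preimage (f := (PNat.val : ℕ+ → ℕ))
        (Set.injOn_of_injective PNat.coe_injective) hfin
    obtain ⟨p, hpA, hpnd⟩ := (hinf.diff hdivfin).nonempty
    have hp : (p : ℕ).Prime := hA hpA
    have hcop : Nat.gcd (n : ℕ) (p : ℕ) = 1 :=
      Nat.Coprime.symm ((Nat.Prime.coprime_iff_not_dvd hp).mpr hpnd)
    exact ⟨p, hnU hcop, hpA⟩
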